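/- Let m > 0, let T ≥ 1 be an integer, let v ∈ (−1/√(1+m²), 1/√(1+m²)), and let (x_t) be an integer sequence with x_t = v·t + o(√t) as t → ∞. Then the sequence δ_t^− converges (namely δ_t^− → −2T·arcsin(mv/√(1−v²))); moreover, ρ_{2π}(0, δ_t^−) → 0 as t → ∞ if and only if v = sin(πk/T)/√(m² + sin²(πk/T)) for some integer k with −T/2 < k < T/2. -/

import Mathlib

open Complex Real Filter Asymptotics

noncomputable section

/-- Number of turns of the checker path with `T` moves whose set of indices of
rightward moves (among moves `0, …, T-1`) is `R`. -/
def turnsOf (T : ℕ) (R : Finset ℕ) : ℕ :=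
  ((Finset.Ico 1 T).filter fun i => ¬((i ∈ R) ↔ (i - 1 ∈ R))).card

/-- The Feynman-checkers wave function on the integer lattice, with `μ = m·ε`:
`waveA X T μ = a(X·ε, T·ε, m, ε)`.  A checker path from `(0,0)` to `(X·ε, T·ε)`
consists of `T` moves, each `(ε,ε)` ("right") or `(-ε,ε)` ("left"); it is
determined by the set `R ⊆ {0,…,T-1}` of indices of its rightward moves.  The
path ends at `X·ε` iff `R.card - (T - R.card) = X`, and its second point is
`(ε,ε)` iff `0 ∈ R`. -/
def waveA (X : ℤ) (T : ℕ) (μ : ℝ) : ℂ :=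
  (((1 + μ ^ 2) ^ ((1 - (T : ℝ)) / 2) : ℝ) : ℂ) * Complex.I *
    ∑ R ∈ (Finset.range T).powerset,
      if 0 ∈ R ∧ 2 * (R.card : ℤ) - (T : ℤ) = X then
        (-Complex.I * (μ : ℂ)) ^ turnsOf T R
      else 0

/-- The wave function `a(x, t, m, ε)` for lattice points `(x,t) ∈ εℤ²`. -/
def wf (x t m ε : ℝ) : ℂ := waveA ⌊x / ε⌋ ⌊t / ε⌋.toNat (m * ε)

/-- `ã₁(x, t, m, ε) = Re a(x, t+ε, m, ε)`. -/
def a1 (x t m ε : ℝ) : ℝ := (wf x (t + ε) m ε).re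

/-- `ã₂(x, t, m, ε) = Im a(x+ε, t+ε, m, ε)`. -/
def a2 (x t m ε : ℝ) : ℝ := (wf (x + ε) (t + ε) m ε).im

end

/-- The phase `θ(x, t, m, ε)`. -/
noncomputable def theta (x t m ε : ℝ) : ℝ :=
  (t / ε) *
      (Real.arcsin (m * ε / Real.sqrt ((1 + m ^ 2 * ε ^ 2) * (1 - (x / t) ^ 2))) -
        (x / t) * Real.arcsin (m * ε * (x / t) / Real.sqrt (1 - (x / t) ^ 2))) +
    π / 4

/-- `ρ_p(a, b)`: the distance from `b − a` to the nearest point of `pℤ`. -/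
noncomputable def rho (p a b : ℝ) : ℝ := ⨅ k : ℤ, |b - a - p * k|

/-- `δ_t^− = θ(x_t, t, m) − θ(x_t − 2T, t, m)` (lattice step `ε = 1`). -/
noncomputable def deltaMinus (m : ℝ) (T : ℕ) (x : ℕ → ℤ) (t : ℕ) : ℝ :=
  theta (x t : ℝ) (t : ℝ) m 1 - theta ((x t : ℝ) - 2 * T) (t : ℝ) m 1

/-- `δ_t^+ = θ(x_t, t, m) + θ(x_t − 2T, t, m)` (lattice step `ε = 1`). -/
noncomputable def deltaPlus (m : ℝ) (T : ℕ) (x : ℕ → ℤ) (t : ℕ) : ℝ :=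
  theta (x t : ℝ) (t : ℝ) m 1 + theta ((x t : ℝ) - 2 * T) (t : ℝ) m 1

/-- `γ_t = min {ρ_{2π}(0, δ_t^−), ρ_{2π}(π, δ_t^+)}`. -/
noncomputable def gammaSeq (m : ℝ) (T : ℕ) (x : ℕ → ℤ) (t : ℕ) : ℝ :=
  min (rho (2 * π) 0 (deltaMinus m T x t)) (rho (2 * π) π (deltaPlus m T x t))

noncomputable def phiFn (m u : ℝ) : ℝ := Real.arcsin (m * u / Real.sqrt (1 - u ^ 2))

noncomputable def Ffn (m u : ℝ) : ℝ :=
  Real.arcsin (m / Real.sqrt ((1 + m ^ 2) * (1 - u ^ 2))) - u * phiFn m u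

lemma theta_one (x t m : ℝ) : theta x t m 1 = t * Ffn m (x / t) + π / 4 := by
  simp [theta, Ffn, phiFn]

lemma hasDerivAt_Ffn {m : ℝ} (hm : 0 < m) {u : ℝ} (hu : (1 + m ^ 2) * u ^ 2 < 1) :
    HasDerivAt (Ffn m) (-(phiFn m u)) u := by
  have hm1 : (0:ℝ) < 1 + m ^ 2 := by positivity
  have hu1 : u ^ 2 < 1 := by nlinarith [sq_nonneg u, sq_nonneg m]
  have h1u : (0:ℝ) < 1 - u ^ 2 := by linarith
  have hP : (0:ℝ) < (1 + m ^ 2) * (1 - u ^ 2) := by positivity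
  have hQ : (0:ℝ) < 1 - (1 + m ^ 2) * u ^ 2 := by linarith
  have hPm : m ^ 2 < (1 + m ^ 2) * (1 - u ^ 2) := by nlinarith
  have hrP : 0 < Real.sqrt ((1 + m ^ 2) * (1 - u ^ 2)) := Real.sqrt_pos.2 hP
  have hr : 0 < Real.sqrt (1 - u ^ 2) := Real.sqrt_pos.2 h1u
  have hrQ : 0 < Real.sqrt (1 - (1 + m ^ 2) * u ^ 2) := Real.sqrt_pos.2 hQ
  -- inner polynomial derivatives
  have hinner : HasDerivAt (fun u : ℝ => (1 + m ^ 2) * (1 - u ^ 2))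
      ((1 + m ^ 2) * (-(2 * u))) u := by
    have h := ((hasDerivAt_pow 2 u).const_sub 1).const_mul (1 + m ^ 2)
    simpa using h
  have hinner2 : HasDerivAt (fun u : ℝ => 1 - u ^ 2) (-(2 * u)) u := by
    simpa using (hasDerivAt_pow 2 u).const_sub 1
  have hsqrtP : HasDerivAt (fun u : ℝ => Real.sqrt ((1 + m ^ 2) * (1 - u ^ 2)))
      (1 / (2 * Real.sqrt ((1 + m ^ 2) * (1 - u ^ 2))) * ((1 + m ^ 2) * (-(2 * u)))) u :=
    (Real.hasDerivAt_sqrt hP.ne').comp u hinner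
  have hsqrtr : HasDerivAt (fun u : ℝ => Real.sqrt (1 - u ^ 2))
      (1 / (2 * Real.sqrt (1 - u ^ 2)) * (-(2 * u))) u :=
    (Real.hasDerivAt_sqrt h1u.ne').comp u hinner2
  -- g = m / sqrt P
  have hg : HasDerivAt (fun u : ℝ => m / Real.sqrt ((1 + m ^ 2) * (1 - u ^ 2)))
      ((0 * Real.sqrt ((1 + m ^ 2) * (1 - u ^ 2)) -
          m * (1 / (2 * Real.sqrt ((1 + m ^ 2) * (1 - u ^ 2))) * ((1 + m ^ 2) * (-(2 * u))))) /
        Real.sqrt ((1 + m ^ 2) * (1 - u ^ 2)) ^ 2) u :=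
    (hasDerivAt_const u m).div hsqrtP hrP.ne'
  have hgval1 : m / Real.sqrt ((1 + m ^ 2) * (1 - u ^ 2)) ≠ -1 := by
    have : 0 < m / Real.sqrt ((1 + m ^ 2) * (1 - u ^ 2)) := by positivity
    linarith
  have hgval2 : m / Real.sqrt ((1 + m ^ 2) * (1 - u ^ 2)) ≠ 1 := by
    have : m / Real.sqrt ((1 + m ^ 2) * (1 - u ^ 2)) < 1 := by
      rw [div_lt_one hrP]
      exact Real.lt_sqrt_of_sq_lt hPm
    linarith
  have harcsinG := (Real.hasDerivAt_arcsin hgval1 hgval2).comp u hg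
  -- s = m * u / sqrt (1 - u^2)
  have hmu : HasDerivAt (fun u : ℝ => m * u) (m * 1) u := (hasDerivAt_id u).const_mul m
  have hs : HasDerivAt (fun u : ℝ => m * u / Real.sqrt (1 - u ^ 2))
      ((m * 1 * Real.sqrt (1 - u ^ 2) -
          m * u * (1 / (2 * Real.sqrt (1 - u ^ 2)) * (-(2 * u)))) /
        Real.sqrt (1 - u ^ 2) ^ 2) u :=
    hmu.div hsqrtr hr.ne'
  have hs2 : (m * u / Real.sqrt (1 - u ^ 2)) ^ 2 < 1 := by
    rw [div_pow, Real.sq_sqrt h1u.le, div_lt_one h1u]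
    nlinarith
  have hsabs := abs_lt.1 ((sq_lt_one_iff_abs_lt_one _).1 hs2)
  have harcsinS := (Real.hasDerivAt_arcsin (ne_of_gt hsabs.1) (ne_of_lt hsabs.2)).comp u hs
  have hsecond := (hasDerivAt_id u).mul harcsinS
  have htot := harcsinG.sub hsecond
  -- identify functions
  have hfun : HasDerivAt (Ffn m)
      ((1 / Real.sqrt (1 - (m / Real.sqrt ((1 + m ^ 2) * (1 - u ^ 2))) ^ 2) *
          ((0 * Real.sqrt ((1 + m ^ 2) * (1 - u ^ 2)) -
              m * (1 / (2 * Real.sqrt ((1 + m ^ 2) * (1 - u ^ 2))) * ((1 + m ^ 2) * (-(2 * u))))) /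
            Real.sqrt ((1 + m ^ 2) * (1 - u ^ 2)) ^ 2)) -
        (1 * Real.arcsin (m * u / Real.sqrt (1 - u ^ 2)) +
          u * (1 / Real.sqrt (1 - (m * u / Real.sqrt (1 - u ^ 2)) ^ 2) *
            ((m * 1 * Real.sqrt (1 - u ^ 2) -
                m * u * (1 / (2 * Real.sqrt (1 - u ^ 2)) * (-(2 * u)))) /
              Real.sqrt (1 - u ^ 2) ^ 2)))) u := htot
  -- simplify sqrt expressions
  have hA : Real.sqrt (1 - (m / Real.sqrt ((1 + m ^ 2) * (1 - u ^ 2))) ^ 2) =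
      Real.sqrt (1 - (1 + m ^ 2) * u ^ 2) / Real.sqrt ((1 + m ^ 2) * (1 - u ^ 2)) := by
    rw [show (1 : ℝ) - (m / Real.sqrt ((1 + m ^ 2) * (1 - u ^ 2))) ^ 2 =
        (1 - (1 + m ^ 2) * u ^ 2) / ((1 + m ^ 2) * (1 - u ^ 2)) by
      rw [div_pow, Real.sq_sqrt hP.le]; field_simp; ring]
    exact Real.sqrt_div hQ.le _
  have hB : Real.sqrt (1 - (m * u / Real.sqrt (1 - u ^ 2)) ^ 2) =
      Real.sqrt (1 - (1 + m ^ 2) * u ^ 2) / Real.sqrt (1 - u ^ 2) := by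
    rw [show (1 : ℝ) - (m * u / Real.sqrt (1 - u ^ 2)) ^ 2 =
        (1 - (1 + m ^ 2) * u ^ 2) / (1 - u ^ 2) by
      rw [div_pow, Real.sq_sqrt h1u.le]; field_simp; ring]
    exact Real.sqrt_div hQ.le _
  rw [hA, hB] at hfun
  convert hfun using 1
  unfold phiFn
  set a := Real.sqrt ((1 + m ^ 2) * (1 - u ^ 2)) with hadef
  set b := Real.sqrt (1 - u ^ 2) with hbdef
  set q := Real.sqrt (1 - (1 + m ^ 2) * u ^ 2) with hqdef
  have ea : a ^ 2 = (1 + m ^ 2) * (1 - u ^ 2) := Real.sq_sqrt hP.le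
  have eb : b ^ 2 = 1 - u ^ 2 := Real.sq_sqrt h1u.le
  set w := Real.arcsin (m * u / b) with hwdef
  field_simp
  linear_combination (m * u) *
    ((1 + b ^ 2 - (1 - u ^ 2)) * ea - (1 + m ^ 2) * u ^ 2 * eb)

lemma round_min {p y : ℝ} (hp : 0 < p) (k : ℤ) :
    |y - p * round (y / p)| ≤ |y - p * k| := by
  have h1 : ∀ z : ℤ, |y - p * z| = p * |y / p - z| := by
    intro z
    rw [show y - p * z = p * (y / p - z) by field_simp, abs_mul, abs_of_pos hp]
  rw [h1, h1]
  exact mul_le_mul_of_nonneg_left (round_le (y / p) k) hp.le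

lemma rho_zero_eq (p y : ℝ) (hp : 0 < p) :
    rho p 0 y = |y - p * round (y / p)| := by
  have hb : BddBelow (Set.range fun k : ℤ => |y - 0 - p * k|) := by
    refine ⟨0, ?_⟩; rintro z ⟨k, rfl⟩; positivity
  refine le_antisymm ?_ ?_
  · have := ciInf_le hb (round (y / p))
    simpa [rho] using this
  · refine le_ciInf fun k => ?_
    simpa using round_min hp k

lemma rho_nonneg (p y : ℝ) : 0 ≤ rho p 0 y :=
  le_ciInf fun k => abs_nonneg _

lemma rho_le (p y : ℝ) (hp : 0 < p) (k : ℤ) : rho p 0 y ≤ |y - p * k| := by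
  rw [rho_zero_eq p y hp]; exact round_min hp k

lemma continuousAt_phiFn (m : ℝ) {u : ℝ} (h1u : u ^ 2 < 1) :
    ContinuousAt (phiFn m) u := by
  have hr : 0 < Real.sqrt (1 - u ^ 2) := Real.sqrt_pos.2 (by linarith)
  have hc : ContinuousAt (fun u : ℝ => m * u / Real.sqrt (1 - u ^ 2)) u := by
    refine ContinuousAt.div (by fun_prop) ?_ hr.ne'
    exact (Real.continuous_sqrt.comp (by fun_prop)).continuousAt
  exact Real.continuous_arcsin.continuousAt.comp hc

lemma tendsto_ratio {v : ℝ} {x : ℕ → ℤ}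
    (hx : (fun t : ℕ => (x t : ℝ) - v * t) =o[atTop] fun t : ℕ => (t : ℝ) ^ ((1:ℝ)/2)) :
    Tendsto (fun t : ℕ => (x t : ℝ) / t) atTop (nhds v) := by
  have hbig : (fun t : ℕ => (t : ℝ) ^ ((1:ℝ)/2)) =O[atTop] fun t : ℕ => (t : ℝ) := by
    refine Asymptotics.IsBigO.of_bound 1 ?_
    filter_upwards [eventually_ge_atTop 1] with t ht
    have ht1 : (1:ℝ) ≤ t := by exact_mod_cast ht
    have ha1 : |(t:ℝ) ^ ((1:ℝ)/2)| = (t:ℝ) ^ ((1:ℝ)/2) := abs_of_nonneg (by positivity)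
    have ha2 : |(t:ℝ)| = (t:ℝ) := abs_of_nonneg (by linarith)
    rw [one_mul, Real.norm_eq_abs, Real.norm_eq_abs, ha1, ha2]
    calc (t:ℝ) ^ ((1:ℝ)/2) ≤ (t:ℝ) ^ (1:ℝ) :=
          Real.rpow_le_rpow_of_exponent_le ht1 (by norm_num)
      _ = t := Real.rpow_one t
  have hlo := (hx.trans_isBigO hbig).tendsto_div_nhds_zero
  have h2 : Tendsto (fun t : ℕ => v + ((x t : ℝ) - v * t) / t) atTop (nhds (v + 0)) :=
    tendsto_const_nhds.add hlo
  rw [add_zero] at h2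
  refine h2.congr' ?_
  filter_upwards [eventually_ge_atTop 1] with t ht
  have ht0 : (t:ℝ) ≠ 0 := Nat.cast_ne_zero.2 (by omega)
  field_simp; ring

lemma key_tendsto {m : ℝ} (hm : 0 < m) (T : ℕ) (hT : 1 ≤ T) {v : ℝ}
    (hv2 : (1 + m ^ 2) * v ^ 2 < 1) {x : ℕ → ℤ}
    (hxt : Tendsto (fun t : ℕ => (x t : ℝ) / t) atTop (nhds v)) :
    Tendsto (fun t : ℕ => (t : ℝ) * Ffn m ((x t : ℝ) / t) -
      (t : ℝ) * Ffn m (((x t : ℝ) - 2 * T) / t)) atTop (nhds (-2 * T * phiFn m v)) := by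
  have hTpos : (0:ℝ) < T := by exact_mod_cast hT
  have hbt : Tendsto (fun t : ℕ => ((x t : ℝ) - 2 * T) / t) atTop (nhds v) := by
    have h2 : Tendsto (fun t : ℕ => (2 * T : ℝ) / t) atTop (nhds 0) :=
      tendsto_const_div_atTop_nhds_zero_nat _
    have h3 := hxt.sub h2
    rw [sub_zero] at h3
    refine h3.congr fun t => ?_
    ring
  rw [Metric.tendsto_atTop]
  intro ε hε
  have hv1 : v ^ 2 < 1 := by nlinarith [sq_nonneg v, sq_nonneg m]
  set ε' := ε / (2 * T + 1) with hε'def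
  have hε' : 0 < ε' := by positivity
  have hcont := continuousAt_phiFn m hv1
  have hopen : ∀ᶠ u in nhds v, (1 + m ^ 2) * u ^ 2 < 1 := by
    have hc : ContinuousAt (fun u : ℝ => (1 + m ^ 2) * u ^ 2) v := by fun_prop
    exact hc (isOpen_Iio.mem_nhds hv2)
  have hnear : ∀ᶠ u in nhds v, dist (phiFn m u) (phiFn m v) < ε' :=
    hcont (Metric.ball_mem_nhds _ hε')
  obtain ⟨ρ, hρ, hball⟩ := Metric.eventually_nhds_iff.1 (hopen.and hnear)
  have hev1 : ∀ᶠ t : ℕ in atTop, dist ((x t : ℝ) / t) v < ρ :=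
    hxt (Metric.ball_mem_nhds v hρ)
  have hev2 : ∀ᶠ t : ℕ in atTop, dist (((x t : ℝ) - 2 * T) / t) v < ρ :=
    hbt (Metric.ball_mem_nhds v hρ)
  obtain ⟨N, hN⟩ := eventually_atTop.1 ((hev1.and hev2).and (eventually_ge_atTop 1))
  refine ⟨N, fun t ht => ?_⟩
  obtain ⟨⟨hta, htb⟩, ht1⟩ := hN t ht
  have ht0 : (0:ℝ) < t := by exact_mod_cast Nat.pos_of_ne_zero (by omega)
  set A := (x t : ℝ) / t with hAdef
  set B := ((x t : ℝ) - 2 * T) / t with hBdef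
  have hABdiff : A - B = 2 * T / t := by rw [hAdef, hBdef]; ring
  have hBA : B < A := by
    have h4 : (0:ℝ) < 2 * T / t := by positivity
    linarith
  have hmem : ∀ u, u ∈ Set.Icc B A → dist u v < ρ := by
    intro u hu
    rw [Real.dist_eq, abs_sub_lt_iff]
    rw [Real.dist_eq, abs_sub_lt_iff] at hta htb
    exact ⟨by linarith [hu.2, hta.1], by linarith [hu.1, htb.2]⟩
  have hderiv : ∀ u ∈ Set.Icc B A, HasDerivAt (Ffn m) (-(phiFn m u)) u := fun u hu =>
    hasDerivAt_Ffn hm (hball (hmem u hu)).1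
  obtain ⟨ξ, hξ, hslope⟩ :=
    exists_hasDerivAt_eq_slope (Ffn m) (fun u => -(phiFn m u)) hBA
      (fun u hu => (hderiv u hu).continuousAt.continuousWithinAt)
      (fun u hu => hderiv u (Set.Ioo_subset_Icc_self hu))
  have hξφ : dist (phiFn m ξ) (phiFn m v) < ε' :=
    (hball (hmem ξ (Set.Ioo_subset_Icc_self hξ))).2
  have heq : (t:ℝ) * Ffn m A - (t:ℝ) * Ffn m B = 2 * T * (-(phiFn m ξ)) := by
    have h1 : Ffn m A - Ffn m B = (A - B) * (-(phiFn m ξ)) := by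
      rw [hslope, mul_div_cancel₀ _ (sub_ne_zero.2 hBA.ne')]
    calc (t:ℝ) * Ffn m A - (t:ℝ) * Ffn m B = (t:ℝ) * (Ffn m A - Ffn m B) := by ring
      _ = (t:ℝ) * ((A - B) * (-(phiFn m ξ))) := by rw [h1]
      _ = (t:ℝ) * (2 * T / t * (-(phiFn m ξ))) := by rw [hABdiff]
      _ = 2 * T * (-(phiFn m ξ)) := by field_simp
  rw [heq, Real.dist_eq]
  have habs : |2 * T * (-(phiFn m ξ)) - -2 * T * phiFn m v| =
      2 * T * |phiFn m ξ - phiFn m v| := by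
    rw [show 2 * (T:ℝ) * (-(phiFn m ξ)) - -2 * T * phiFn m v =
      -(2 * T) * (phiFn m ξ - phiFn m v) by ring, abs_mul, abs_neg,
      abs_of_pos (show (0:ℝ) < 2 * T by positivity)]
  rw [habs]
  rw [Real.dist_eq] at hξφ
  calc 2 * (T:ℝ) * |phiFn m ξ - phiFn m v| ≤ 2 * T * ε' :=
        mul_le_mul_of_nonneg_left hξφ.le (by positivity)
    _ < ε := by
        rw [hε'def, mul_div_assoc']
        rw [div_lt_iff₀ (by positivity)]
        nlinarith [mul_pos hε hTpos]

lemma v_of_w {m v : ℝ} (hm : 0 < m) (hv1 : v ^ 2 < 1) :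
    (m * v / Real.sqrt (1 - v ^ 2)) /
      Real.sqrt (m ^ 2 + (m * v / Real.sqrt (1 - v ^ 2)) ^ 2) = v := by
  have h1v : (0:ℝ) < 1 - v ^ 2 := by linarith
  have hr : 0 < Real.sqrt (1 - v ^ 2) := Real.sqrt_pos.2 h1v
  have hsum : m ^ 2 + (m * v / Real.sqrt (1 - v ^ 2)) ^ 2 = m ^ 2 / (1 - v ^ 2) := by
    rw [div_pow, Real.sq_sqrt h1v.le]; field_simp; ring
  rw [hsum, Real.sqrt_div (sq_nonneg m), Real.sqrt_sq hm.le]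
  field_simp

lemma w_of_s {m s : ℝ} (hm : 0 < m) :
    m * (s / Real.sqrt (m ^ 2 + s ^ 2)) /
      Real.sqrt (1 - (s / Real.sqrt (m ^ 2 + s ^ 2)) ^ 2) = s := by
  have hms : (0:ℝ) < m ^ 2 + s ^ 2 := by positivity
  have hrs : 0 < Real.sqrt (m ^ 2 + s ^ 2) := Real.sqrt_pos.2 hms
  have h1v : 1 - (s / Real.sqrt (m ^ 2 + s ^ 2)) ^ 2 = m ^ 2 / (m ^ 2 + s ^ 2) := by
    rw [div_pow, Real.sq_sqrt hms.le]; field_simp; ring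
  rw [h1v, Real.sqrt_div (sq_nonneg m), Real.sqrt_sq hm.le]
  field_simp

theorem stmt11 (m : ℝ) (hm : 0 < m) (T : ℕ) (hT : 1 ≤ T)
    (v : ℝ) (hv : v ∈ Set.Ioo (-(1 / Real.sqrt (1 + m ^ 2))) (1 / Real.sqrt (1 + m ^ 2)))
    (x : ℕ → ℤ)
    (hx : (fun t : ℕ => (x t : ℝ) - v * t) =o[Filter.atTop]
      (fun t : ℕ => (t : ℝ) ^ ((1 : ℝ) / 2))) :
    Filter.Tendsto (deltaMinus m T x) Filter.atTop
      (nhds (-2 * T * Real.arcsin (m * v / Real.sqrt (1 - v ^ 2)))) ∧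
    (Filter.Tendsto (fun t : ℕ => rho (2 * π) 0 (deltaMinus m T x t))
        Filter.atTop (nhds 0) ↔
      ∃ k : ℤ, -((T : ℝ) / 2) < (k : ℝ) ∧ (k : ℝ) < (T : ℝ) / 2 ∧
        v = Real.sin (π * k / T) / Real.sqrt (m ^ 2 + Real.sin (π * k / T) ^ 2)) := by
  obtain ⟨hv1', hv2'⟩ := hv
  have hm1 : (0:ℝ) < 1 + m ^ 2 := by positivity
  have hTpos : (0:ℝ) < T := by exact_mod_cast hT
  have hv2 : (1 + m ^ 2) * v ^ 2 < 1 := by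
    have h := sq_lt_sq' hv1' hv2'
    rw [div_pow, one_pow, Real.sq_sqrt hm1.le, lt_div_iff₀ hm1] at h
    linarith
  have hv1 : v ^ 2 < 1 := by nlinarith [sq_nonneg v, sq_nonneg m]
  have h1v : (0:ℝ) < 1 - v ^ 2 := by linarith
  have hrv : 0 < Real.sqrt (1 - v ^ 2) := Real.sqrt_pos.2 h1v
  have hw2 : (m * v / Real.sqrt (1 - v ^ 2)) ^ 2 < 1 := by
    rw [div_pow, Real.sq_sqrt h1v.le, div_lt_one h1v]; nlinarith
  have hwabs := abs_lt.1 ((sq_lt_one_iff_abs_lt_one _).1 hw2)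
  have hπ : (0:ℝ) < 2 * π := by positivity
  have hφv : phiFn m v = Real.arcsin (m * v / Real.sqrt (1 - v ^ 2)) := rfl
  set L := -2 * (T:ℝ) * Real.arcsin (m * v / Real.sqrt (1 - v ^ 2)) with hLdef
  have hδ : Filter.Tendsto (deltaMinus m T x) Filter.atTop (nhds L) := by
    have hkey := key_tendsto hm T hT hv2 (tendsto_ratio hx)
    rw [show -2 * (T:ℝ) * phiFn m v = L by rw [hφv]] at hkey
    refine Filter.Tendsto.congr (fun t => ?_) hkey
    unfold deltaMinus
    rw [theta_one, theta_one]; ring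
  refine ⟨hδ, ?_, ?_⟩
  · intro hρ0
    have hRzero : rho (2 * π) 0 L = 0 := by
      by_contra hR
      have hRpos : 0 < rho (2 * π) 0 L := (rho_nonneg _ _).lt_of_ne (Ne.symm hR)
      have he1 : ∀ᶠ t : ℕ in Filter.atTop,
          dist (deltaMinus m T x t) L < rho (2 * π) 0 L / 3 :=
        hδ (Metric.ball_mem_nhds _ (by linarith))
      have he2 : ∀ᶠ t : ℕ in Filter.atTop,
          dist (rho (2 * π) 0 (deltaMinus m T x t)) 0 < rho (2 * π) 0 L / 3 :=
        hρ0 (Metric.ball_mem_nhds _ (by linarith))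
      obtain ⟨t, h1, h2⟩ := (he1.and he2).exists
      rw [Real.dist_eq] at h1
      rw [Real.dist_eq, sub_zero, _root_.abs_of_nonneg (rho_nonneg _ _)] at h2
      rw [rho_zero_eq _ _ hπ] at h2
      have h3 := rho_le (2 * π) L hπ (round (deltaMinus m T x t / (2 * π)))
      have h4 := abs_sub_le L (deltaMinus m T x t)
        (2 * π * round (deltaMinus m T x t / (2 * π)))
      rw [_root_.abs_sub_comm L (deltaMinus m T x t)] at h4
      linarith
    have hL2 : L = 2 * π * round (L / (2 * π)) := by
      have h5 := rho_zero_eq (2 * π) L hπ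
      rw [hRzero] at h5
      have h6 := abs_eq_zero.1 h5.symm
      linarith
    set n := round (L / (2 * π)) with hndef
    have hφ : phiFn m v = π * ((-n : ℤ) : ℝ) / T := by
      rw [hφv]
      rw [hLdef] at hL2
      push_cast
      rw [eq_div_iff hTpos.ne']
      linarith
    refine ⟨-n, ?_, ?_, ?_⟩
    · have hb := Real.neg_pi_div_two_lt_arcsin.2 hwabs.1
      rw [← hφv, hφ, lt_div_iff₀ hTpos] at hb
      nlinarith [Real.pi_pos]
    · have hb := Real.arcsin_lt_pi_div_two.2 hwabs.2
      rw [← hφv, hφ, div_lt_iff₀ hTpos] at hb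
      nlinarith [Real.pi_pos]
    · have hsin : Real.sin (π * ((-n : ℤ) : ℝ) / T) = m * v / Real.sqrt (1 - v ^ 2) := by
        rw [← hφ, hφv, Real.sin_arcsin hwabs.1.le hwabs.2.le]
      rw [hsin]
      exact (v_of_w hm hv1).symm
  · rintro ⟨k, hk1, hk2, hkv⟩
    have hwk : m * v / Real.sqrt (1 - v ^ 2) = Real.sin (π * k / T) := by
      rw [hkv]; exact w_of_s hm
    have hbound1 : -(π / 2) ≤ π * k / T := by
      rw [le_div_iff₀ hTpos]
      nlinarith [Real.pi_pos]
    have hbound2 : π * k / T ≤ π / 2 := by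
      rw [div_le_iff₀ hTpos]
      nlinarith [Real.pi_pos]
    have hφ : Real.arcsin (m * v / Real.sqrt (1 - v ^ 2)) = π * k / T := by
      rw [hwk, Real.arcsin_sin hbound1 hbound2]
    have hLk : L = 2 * π * ((-k : ℤ) : ℝ) := by
      rw [hLdef, hφ]
      push_cast
      field_simp
    have hg : Filter.Tendsto (fun t => |deltaMinus m T x t - L|) Filter.atTop (nhds 0) := by
      have h7 := (hδ.sub_const L).abs
      rw [sub_self, abs_zero] at h7
      exact h7
    refine squeeze_zero (fun t => rho_nonneg _ _) (fun t => ?_) hg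
    rw [hLk]
    exact rho_le _ _ hπ (-k)
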